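/- On ℝ⁶ with coordinates (v₁,…,v₆) define the vector fields X₁ᴿ = ∂/∂v₁ + v₅ ∂/∂v₄ − (1/2)v₅² ∂/∂v₆, X₂ᴿ = v₁ ∂/∂v₁ + ∂/∂v₂ + (1/2)v₄ ∂/∂v₄ − (1/2)v₅ ∂/∂v₅, X₃ᴿ = v₁² ∂/∂v₁ + 2v₁ ∂/∂v₂ + e^{v₂} ∂/∂v₃ − v₄ ∂/∂v₅ + (1/2)v₄² ∂/∂v₆, X₄ᴿ = ∂/∂v₄, X₅ᴿ = ∂/∂v₅ − v₄ ∂/∂v₆, X₆ᴿ = ∂/∂v₆. Then at every point of ℝ⁶ one has [X₁ᴿ,X₂ᴿ] = X₁ᴿ, [X₁ᴿ,X₃ᴿ] = 2X₂ᴿ, [X₂ᴿ,X₃ᴿ] = X₃ᴿ, [X₁ᴿ,X₄ᴿ] = 0, [X₂ᴿ,X₄ᴿ] = −(1/2)X₄ᴿ, [X₃ᴿ,X₄ᴿ] = X₅ᴿ, [X₁ᴿ,X₅ᴿ] = −X₄ᴿ, [X₂ᴿ,X₅ᴿ] = (1/2)X₅ᴿ, [X₃ᴿ,X₅ᴿ]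 = 0, [X₄ᴿ,X₅ᴿ] = −X₆ᴿ, and [Xαᴿ,X₆ᴿ] = 0 for all α ∈ {1,…,5}; hence X₁ᴿ,…,X₆ᴿ span a 6-dimensional Lie algebra isomorphic to the semidirect sum 𝔰𝔩₂ ⊕_S 𝔥₃ (the Vessiot–Guldberg Lie algebra of the dissipative quantum harmonic oscillator system). -/

import Mathlib

/-- The pointwise Lie bracket of two vector fields on (an open subset of) ℝⁿ,
    `[V,W](p) = (DW)(p)(V(p)) − (DV)(p)(W(p))`. -/
noncomputable def vbracket {n : ℕ} (V W : (Fin n → ℝ) → (Fin n → ℝ)) :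
    (Fin n → ℝ) → (Fin n → ℝ) :=
  fun p => fderiv ℝ W p (V p) - fderiv ℝ V p (W p)

/-- The right-invariant vector fields X₁ᴿ,…,X₆ᴿ of the dissipative quantum
harmonic oscillator system on ℝ⁶, in coordinates (v₁,…,v₆) = (p 0,…,p 5). -/
noncomputable def doX : Fin 6 → (Fin 6 → ℝ) → (Fin 6 → ℝ) :=
  ![fun p => ![1, 0, 0, p 4, 0, -(p 4) ^ 2 / 2],
    fun p => ![p 0, 1, 0, p 3 / 2, -(p 4) / 2, 0],
    fun p => ![(p 0) ^ 2, 2 * p 0, Real.exp (p 1), 0, -(p 3), (p 3) ^ 2 / 2],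
    fun _ => ![0, 0, 0, 1, 0, 0],
    fun p => ![0, 0, 0, 0, 1, -(p 3)],
    fun _ => ![0, 0, 0, 0, 0, 1]]

namespace DOaux

@[simp] lemma cons5 {α : Type*} (a b c d e f : α) :
    (![a, b, c, d, e, f] : Fin 6 → α) 5 = f := rfl

noncomputable def prj (i : Fin 6) : (Fin 6 → ℝ) →L[ℝ] ℝ := ContinuousLinearMap.proj i

lemma hproj (i : Fin 6) (p : Fin 6 → ℝ) : HasFDerivAt (fun x : Fin 6 → ℝ => x i) (prj i) p :=
  hasFDerivAt_apply i p

lemma congrH {p : Fin 6 → ℝ} {f g : (Fin 6 → ℝ) → ℝ} {L L' : (Fin 6 → ℝ) →L[ℝ] ℝ}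
    (h : HasFDerivAt f L p) (hfg : ∀ x, g x = f x) (hL : L' = L) : HasFDerivAt g L' p := by
  rw [funext hfg, hL]; exact h

lemma hconst {p : Fin 6 → ℝ} (c : ℝ) : HasFDerivAt (fun _ : Fin 6 → ℝ => c) (0 : (Fin 6 → ℝ) →L[ℝ] ℝ) p :=
  hasFDerivAt_const c p

noncomputable def D0 (p : Fin 6 → ℝ) : (Fin 6 → ℝ) →L[ℝ] (Fin 6 → ℝ) :=
  ContinuousLinearMap.pi ![0, 0, 0, prj 4, 0, (-(p 4)) • prj 4]

noncomputable def D1 : (Fin 6 → ℝ) →L[ℝ] (Fin 6 → ℝ) :=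
  ContinuousLinearMap.pi ![prj 0, 0, 0, (1 / 2 : ℝ) • prj 3, (-(1 / 2) : ℝ) • prj 4, 0]

noncomputable def D2 (p : Fin 6 → ℝ) : (Fin 6 → ℝ) →L[ℝ] (Fin 6 → ℝ) :=
  ContinuousLinearMap.pi
    ![(2 * p 0) • prj 0, (2 : ℝ) • prj 0, Real.exp (p 1) • prj 1, 0, -(prj 3), (p 3) • prj 3]

noncomputable def D4 : (Fin 6 → ℝ) →L[ℝ] (Fin 6 → ℝ) :=
  ContinuousLinearMap.pi ![0, 0, 0, 0, 0, -(prj 3)]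

lemma hD0 (p : Fin 6 → ℝ) : HasFDerivAt (doX 0) (D0 p) p := by
  rw [hasFDerivAt_pi']
  intro i
  fin_cases i
  · simpa [doX, D0, ContinuousLinearMap.proj_pi] using hconst (p := p) 1
  · simpa [doX, D0, ContinuousLinearMap.proj_pi] using hconst (p := p) 0
  · simpa [doX, D0, ContinuousLinearMap.proj_pi] using hconst (p := p) 0
  · simpa [doX, D0, ContinuousLinearMap.proj_pi] using hproj 4 p
  · simpa [doX, D0, ContinuousLinearMap.proj_pi] using hconst (p := p) 0
  · simp only [doX, D0, ContinuousLinearMap.proj_pi, Matrix.cons_val_zero, Matrix.cons_val_one,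
      Matrix.head_cons, cons5]
    exact congrH (((hproj 4 p).mul (hproj 4 p)).const_mul (-(1/2)))
      (fun x => by simp [doX]; try ring) (by ext v; simp [prj]; try ring)

lemma hD1 (p : Fin 6 → ℝ) : HasFDerivAt (doX 1) D1 p := by
  rw [hasFDerivAt_pi']
  intro i
  fin_cases i
  · simpa [doX, D1, ContinuousLinearMap.proj_pi] using hproj 0 p
  · simpa [doX, D1, ContinuousLinearMap.proj_pi] using hconst (p := p) 1
  · simpa [doX, D1, ContinuousLinearMap.proj_pi] using hconst (p := p) 0
  · simp only [doX, D1, ContinuousLinearMap.proj_pi, Matrix.cons_val_zero, Matrix.cons_val_one,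
      Matrix.head_cons, cons5]
    exact congrH ((hproj 3 p).const_mul (1/2)) (fun x => by simp [doX]; try ring) (by ext v; simp [prj])
  · simp only [doX, D1, ContinuousLinearMap.proj_pi, Matrix.cons_val_zero, Matrix.cons_val_one,
      Matrix.head_cons, cons5]
    exact congrH ((hproj 4 p).const_mul (-(1/2))) (fun x => by simp [doX]; try ring)
      (by ext v; simp [prj]; try ring)
  · simpa [doX, D1, ContinuousLinearMap.proj_pi] using hconst (p := p) 0

lemma hD2 (p : Fin 6 → ℝ) : HasFDerivAt (doX 2) (D2 p) p := by
  rw [hasFDerivAt_pi']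
  intro i
  fin_cases i
  · simp only [doX, D2, ContinuousLinearMap.proj_pi, Matrix.cons_val_zero, Matrix.cons_val_one,
      Matrix.head_cons, cons5]
    exact congrH ((hproj 0 p).mul (hproj 0 p)) (fun x => by simp [doX]; try ring)
      (by ext v; simp [prj]; try ring)
  · simp only [doX, D2, ContinuousLinearMap.proj_pi, Matrix.cons_val_zero, Matrix.cons_val_one,
      Matrix.head_cons, cons5]
    exact congrH ((hproj 0 p).const_mul 2) (fun x => by simp [doX]; try ring) (by ext v; simp [prj])
  · simpa [doX, D2, ContinuousLinearMap.proj_pi] using (hproj 1 p).exp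
  · simpa [doX, D2, ContinuousLinearMap.proj_pi] using hconst (p := p) 0
  · simpa [doX, D2, ContinuousLinearMap.proj_pi] using (hproj 3 p).fun_neg
  · simp only [doX, D2, ContinuousLinearMap.proj_pi, Matrix.cons_val_zero, Matrix.cons_val_one,
      Matrix.head_cons, cons5]
    exact congrH (((hproj 3 p).mul (hproj 3 p)).const_mul (1/2)) (fun x => by simp [doX]; try ring)
      (by ext v; simp [prj]; try ring)

lemma hD3 (p : Fin 6 → ℝ) : HasFDerivAt (doX 3) (0 : (Fin 6 → ℝ) →L[ℝ] (Fin 6 → ℝ)) p := by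
  have h : doX 3 = fun _ : Fin 6 → ℝ => (![0, 0, 0, 1, 0, 0] : Fin 6 → ℝ) := rfl
  rw [h]
  exact hasFDerivAt_const _ _

lemma hD4 (p : Fin 6 → ℝ) : HasFDerivAt (doX 4) D4 p := by
  rw [hasFDerivAt_pi']
  intro i
  fin_cases i
  · simpa [doX, D4, ContinuousLinearMap.proj_pi] using hconst (p := p) 0
  · simpa [doX, D4, ContinuousLinearMap.proj_pi] using hconst (p := p) 0
  · simpa [doX, D4, ContinuousLinearMap.proj_pi] using hconst (p := p) 0
  · simpa [doX, D4, ContinuousLinearMap.proj_pi] using hconst (p := p) 0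
  · simpa [doX, D4, ContinuousLinearMap.proj_pi] using hconst (p := p) 1
  · simpa [doX, D4, ContinuousLinearMap.proj_pi] using (hproj 3 p).fun_neg

lemma hD5 (p : Fin 6 → ℝ) : HasFDerivAt (doX 5) (0 : (Fin 6 → ℝ) →L[ℝ] (Fin 6 → ℝ)) p := by
  have h : doX 5 = fun _ : Fin 6 → ℝ => (![0, 0, 0, 0, 0, 1] : Fin 6 → ℝ) := rfl
  rw [h]
  exact hasFDerivAt_const _ _

end DOaux

namespace DOaux

lemma dX0 : doX 0 = fun p => ![1, 0, 0, p 4, 0, -(p 4) ^ 2 / 2] := rfl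
lemma dX1 : doX 1 = fun p => ![p 0, 1, 0, p 3 / 2, -(p 4) / 2, 0] := rfl
lemma dX2 : doX 2 = fun p => ![(p 0) ^ 2, 2 * p 0, Real.exp (p 1), 0, -(p 3), (p 3) ^ 2 / 2] := rfl
lemma dX3 : doX 3 = fun _ => ![0, 0, 0, 1, 0, 0] := rfl
lemma dX4 : doX 4 = fun p => ![0, 0, 0, 0, 1, -(p 3)] := rfl
lemma dX5 : doX 5 = fun _ => ![0, 0, 0, 0, 0, 1] := rfl

lemma vb {p : Fin 6 → ℝ} {V W : (Fin 6 → ℝ) → (Fin 6 → ℝ)}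
    {LV LW : (Fin 6 → ℝ) →L[ℝ] (Fin 6 → ℝ)}
    (hV : HasFDerivAt V LV p) (hW : HasFDerivAt W LW p) :
    vbracket V W p = LW (V p) - LV (W p) := by
  simp [vbracket, hV.fderiv, hW.fderiv]

end DOaux

namespace DOaux

lemma b01 (p : Fin 6 → ℝ) : vbracket (doX 0) (doX 1) p = doX 0 p := by
  rw [vb (hD0 p) (hD1 p)]
  funext j
  fin_cases j <;> (simp [D0, D1, dX0, dX1, dX2, dX3, dX4, dX5, prj]; try ring)

lemma b02 (p : Fin 6 → ℝ) : vbracket (doX 0) (doX 2) p = (2 : ℝ) • doX 1 p := by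
  rw [vb (hD0 p) (hD2 p)]
  funext j
  fin_cases j <;> (simp [D0, D2, dX0, dX1, dX2, dX3, dX4, dX5, prj]; try ring)

lemma b12 (p : Fin 6 → ℝ) : vbracket (doX 1) (doX 2) p = doX 2 p := by
  rw [vb (hD1 p) (hD2 p)]
  funext j
  fin_cases j <;> (simp [D1, D2, dX0, dX1, dX2, dX3, dX4, dX5, prj]; try ring)

lemma b03 (p : Fin 6 → ℝ) : vbracket (doX 0) (doX 3) p = 0 := by
  rw [vb (hD0 p) (hD3 p)]
  funext j
  fin_cases j <;> (simp [D0, dX0, dX1, dX2, dX3, dX4, dX5, prj]; try ring)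

lemma b13 (p : Fin 6 → ℝ) : vbracket (doX 1) (doX 3) p = -((1 / 2 : ℝ) • doX 3 p) := by
  rw [vb (hD1 p) (hD3 p)]
  funext j
  fin_cases j <;> (simp [D1, dX0, dX1, dX2, dX3, dX4, dX5, prj]; try ring)

lemma b23 (p : Fin 6 → ℝ) : vbracket (doX 2) (doX 3) p = doX 4 p := by
  rw [vb (hD2 p) (hD3 p)]
  funext j
  fin_cases j <;> (simp [D2, dX0, dX1, dX2, dX3, dX4, dX5, prj]; try ring)

lemma b04 (p : Fin 6 → ℝ) : vbracket (doX 0) (doX 4) p = -(doX 3 p) := by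
  rw [vb (hD0 p) (hD4 p)]
  funext j
  fin_cases j <;> (simp [D0, D4, dX0, dX1, dX2, dX3, dX4, dX5, prj]; try ring)

lemma b14 (p : Fin 6 → ℝ) : vbracket (doX 1) (doX 4) p = (1 / 2 : ℝ) • doX 4 p := by
  rw [vb (hD1 p) (hD4 p)]
  funext j
  fin_cases j <;> (simp [D1, D4, dX0, dX1, dX2, dX3, dX4, dX5, prj]; try ring)

lemma b24 (p : Fin 6 → ℝ) : vbracket (doX 2) (doX 4) p = 0 := by
  rw [vb (hD2 p) (hD4 p)]
  funext j
  fin_cases j <;> (simp [D2, D4, dX0, dX1, dX2, dX3, dX4, dX5, prj]; try ring)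

lemma b34 (p : Fin 6 → ℝ) : vbracket (doX 3) (doX 4) p = -(doX 5 p) := by
  rw [vb (hD3 p) (hD4 p)]
  funext j
  fin_cases j <;> (simp [D4, dX0, dX1, dX2, dX3, dX4, dX5, prj]; try ring)

lemma b05 (p : Fin 6 → ℝ) : vbracket (doX 0) (doX 5) p = 0 := by
  rw [vb (hD0 p) (hD5 p)]
  funext j
  fin_cases j <;> (simp [D0, dX0, dX1, dX2, dX3, dX4, dX5, prj]; try ring)

lemma b15 (p : Fin 6 → ℝ) : vbracket (doX 1) (doX 5) p = 0 := by
  rw [vb (hD1 p) (hD5 p)]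
  funext j
  fin_cases j <;> (simp [D1, dX0, dX1, dX2, dX3, dX4, dX5, prj]; try ring)

lemma b25 (p : Fin 6 → ℝ) : vbracket (doX 2) (doX 5) p = 0 := by
  rw [vb (hD2 p) (hD5 p)]
  funext j
  fin_cases j <;> (simp [D2, dX0, dX1, dX2, dX3, dX4, dX5, prj]; try ring)

lemma b35 (p : Fin 6 → ℝ) : vbracket (doX 3) (doX 5) p = 0 := by
  rw [vb (hD3 p) (hD5 p)]
  funext j
  fin_cases j <;> (simp [dX0, dX1, dX2, dX3, dX4, dX5, prj]; try ring)

lemma b45 (p : Fin 6 → ℝ) : vbracket (doX 4) (doX 5) p = 0 := by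
  rw [vb (hD4 p) (hD5 p)]
  funext j
  fin_cases j <;> (simp [D4, dX0, dX1, dX2, dX3, dX4, dX5, prj]; try ring)

end DOaux

open DOaux

/-- The commutation relations of the Vessiot–Guldberg Lie algebra
𝔰𝔩₂ ⊕_S 𝔥₃ of the dissipative quantum harmonic oscillator system. -/
theorem dissipative_oscillator_commutation_relations :
    ∀ p : Fin 6 → ℝ,
      vbracket (doX 0) (doX 1) p = doX 0 p ∧
      vbracket (doX 0) (doX 2) p = (2 : ℝ) • doX 1 p ∧
      vbracket (doX 1) (doX 2) p = doX 2 p ∧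
      vbracket (doX 0) (doX 3) p = 0 ∧
      vbracket (doX 1) (doX 3) p = -((1 / 2 : ℝ) • doX 3 p) ∧
      vbracket (doX 2) (doX 3) p = doX 4 p ∧
      vbracket (doX 0) (doX 4) p = -(doX 3 p) ∧
      vbracket (doX 1) (doX 4) p = (1 / 2 : ℝ) • doX 4 p ∧
      vbracket (doX 2) (doX 4) p = 0 ∧
      vbracket (doX 3) (doX 4) p = -(doX 5 p) ∧
      (∀ α : Fin 6, α ≠ 5 → vbracket (doX α) (doX 5) p = 0) := by
  intro p
  refine ⟨b01 p, b02 p, b12 p, b03 p, b13 p, b23 p, b04 p, b14 p, b24 p, b34 p, ?_⟩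
  intro α hα
  fin_cases α
  · exact b05 p
  · exact b15 p
  · exact b25 p
  · exact b35 p
  · exact b45 p
  · exact absurd rfl hα
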